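/- Every continuous simplicial set is isomorphic to the nerve of a partially ordered set: if X : Δᵒᵖ → Set is continuous, then X ≅ N(P) where P is the poset (X₀, ≤_X). -/

import Mathlib

open CategoryTheory Limits Opposite

/-- The full inclusion `i : Δ ↪ Pos` of the simplex category into the category of
partially ordered sets, sending `[n]` to the poset `{0, …, n}`. -/
def deltaToPartOrd : SimplexCategory ⥤ PartOrd where
  obj n := PartOrd.of (Fin (n.len + 1))
  map f := PartOrd.ofHom f.toOrderHom

/-- The nerve functor `N : Pos ⥤ [Δᵒᵖ, Set]`, i.e. the restricted Yoneda embedding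
along `i : Δ ↪ Pos`: it sends a poset `P` to the simplicial set `N(P) = Pos(i(-), P)`,
whose `n`-simplices are the monotone maps `[n] → P`, with simplicial structure given
by precomposition. -/
def posetNerve : PartOrd ⥤ SimplexCategoryᵒᵖ ⥤ Type :=
  yoneda ⋙ (Functor.whiskeringLeft _ _ Type).obj deltaToPartOrd.op

/-- A simplicial set `X : Δᵒᵖ ⥤ Type` is *continuous* if it preserves all limits that
exist in `Δᵒᵖ`; equivalently, it takes colimits in `Δ` to limits in `Set`. -/
def IsContinuousSSet (X : SimplexCategoryᵒᵖ ⥤ Type) : Prop :=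
  ∀ ⦃J : Type⦄ [SmallCategory J] (D : J ⥤ SimplexCategoryᵒᵖ) (c : Cone D),
    Nonempty (IsLimit c) → Nonempty (IsLimit (X.mapCone c))

/-- The relation `≤_X` on the `0`-simplices of a simplicial set `X`:
`x ≤_X y` iff there is a `1`-simplex `f` with `d₁ f = x` and `d₀ f = y`. -/
def sSetLe (X : SimplexCategoryᵒᵖ ⥤ Type) (x y : X.obj (op (SimplexCategory.mk 0))) : Prop :=
  ∃ f : X.obj (op (SimplexCategory.mk 1)),
    X.map (SimplexCategory.δ 1).op f = x ∧ X.map (SimplexCategory.δ 0).op f = y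

namespace CP

open SimplexCategory



/-- edge morphism `[1] ⟶ z` picking out `i ≤ j` -/
def edgeHom (z : SimplexCategory) (i j : Fin (z.len + 1)) (h : i ≤ j) :
    SimplexCategory.mk 1 ⟶ z :=
  SimplexCategory.Hom.mk
    { toFun := fun x => if x.val = 0 then i else j
      monotone' := by
        intro x y hxy
        have hxy' := hxy
        dsimp only
        split_ifs with hx hy hy
        · exact le_rfl
        · exact h
        · exfalso; have := (Fin.le_def.mp hxy); omega
        · exact le_rfl }

@[simp] lemma edgeHom_zero (z : SimplexCategory) (i j : Fin (z.len + 1)) (h : i ≤ j) :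
    (edgeHom z i j h).toOrderHom 0 = i := rfl

@[simp] lemma edgeHom_one (z : SimplexCategory) (i j : Fin (z.len + 1)) (h : i ≤ j) :
    (edgeHom z i j h).toOrderHom 1 = j := rfl

lemma edgeHom_eq_const {z : SimplexCategory} {i j : Fin (z.len + 1)} {h : i ≤ j}
    (hij : i = j) : edgeHom z i j h = SimplexCategory.const (mk 1) z i := by
  subst hij
  apply SimplexCategory.Hom.ext
  apply OrderHom.ext
  funext x
  simp [edgeHom, SimplexCategory.const]

variable (X : SimplexCategoryᵒᵖ ⥤ Type)

abbrev X0 := X.obj (op (mk 0))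
abbrev X1 := X.obj (op (mk 1))

def vtx {z : SimplexCategory} (i : Fin (z.len + 1)) (σ : X.obj (op z)) : X0 X :=
  X.map (SimplexCategory.const (mk 0) z i).op σ

def ve0 (e : X1 X) : X0 X := vtx X 0 e
def ve1 (e : X1 X) : X0 X := vtx X 1 e

def s0 (x : X0 X) : X1 X := X.map (SimplexCategory.const (mk 1) (mk 0) 0).op x

lemma map_map {a b c : SimplexCategory} (f : a ⟶ b) (g : b ⟶ c) (σ : X.obj (op c)) :
    X.map f.op (X.map g.op σ) = X.map (f ≫ g).op σ :=
  (FunctorToTypes.map_comp_apply X g.op f.op σ).symm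

lemma map_op_map {m m' : SimplexCategoryᵒᵖ} (u : m ⟶ m') {z : SimplexCategory}
    (f : z ⟶ m'.unop) (σ : X.obj m) :
    X.map f.op (X.map u σ) = X.map (f ≫ u.unop).op σ :=
  (FunctorToTypes.map_comp_apply X u f.op σ).symm

lemma vtx_natural {m m' : SimplexCategoryᵒᵖ} (u : m ⟶ m') (σ : X.obj m)
    (i : Fin (m'.unop.len + 1)) :
    vtx X i (X.map u σ) = vtx X (u.unop.toOrderHom i) σ := by
  unfold vtx
  rw [map_op_map, SimplexCategory.const_comp]

lemma ve0_edge {z : SimplexCategory} (i j : Fin (z.len + 1)) (h : i ≤ j) (σ : X.obj (op z)) :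
    ve0 X (X.map (edgeHom z i j h).op σ) = vtx X i σ := by
  unfold ve0 vtx
  rw [map_map, SimplexCategory.const_comp, edgeHom_zero]

lemma ve1_edge {z : SimplexCategory} (i j : Fin (z.len + 1)) (h : i ≤ j) (σ : X.obj (op z)) :
    ve1 X (X.map (edgeHom z i j h).op σ) = vtx X j σ := by
  unfold ve1 vtx
  rw [map_map, SimplexCategory.const_comp, edgeHom_one]

lemma vc_s0 (c : Fin 2) (x : X0 X) :
    X.map (SimplexCategory.const (mk 0) (mk 1) c).op (s0 X x) = x := by
  unfold s0
  rw [map_map, SimplexCategory.const_comp]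
  have : SimplexCategory.const (mk 0) (mk 0)
      ((SimplexCategory.const (mk 1) (mk 0) 0).toOrderHom c) = 𝟙 (mk 0) := by
    rw [show ((SimplexCategory.const (mk 1) (mk 0) 0).toOrderHom c) = 0 from rfl]
    exact SimplexCategory.const_eq_id
  rw [this]
  exact FunctorToTypes.map_id_apply X x

lemma map_const11 (c : Fin 2) (e : X1 X) :
    X.map (SimplexCategory.const (mk 1) (mk 1) c).op e
      = s0 X (X.map (SimplexCategory.const (mk 0) (mk 1) c).op e) := by
  unfold s0
  rw [map_map, SimplexCategory.const_comp]
  rfl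

lemma delta1_eq : (SimplexCategory.δ 1 : mk 0 ⟶ mk 1) = SimplexCategory.const (mk 0) (mk 1) 0 := by
  apply SimplexCategory.Hom.ext
  apply OrderHom.ext
  funext x
  fin_cases x
  decide

lemma delta0_eq : (SimplexCategory.δ 0 : mk 0 ⟶ mk 1) = SimplexCategory.const (mk 0) (mk 1) 1 := by
  apply SimplexCategory.Hom.ext
  apply OrderHom.ext
  funext x
  fin_cases x
  decide

lemma vtx_zero (i : Fin ((mk 0).len + 1)) (σ : X0 X) : vtx X i σ = σ := by
  unfold vtx
  have : SimplexCategory.const (mk 0) (mk 0) i = 𝟙 (mk 0) := by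
    apply SimplexCategory.Hom.ext
    apply OrderHom.ext
    funext x
    have hx : x = 0 := Fin.eq_zero x
    have hi : i = 0 := Fin.eq_zero i
    rw [hx, hi]
    rfl
  rw [this]
  exact FunctorToTypes.map_id_apply X σ


/-! ### The vertex-edge diagram for `[n]` -/

def JA (n : ℕ) : Type := {p : Fin (n+1) × Fin (n+1) // p.1 ≤ p.2}

instance (n : ℕ) : Preorder (JA n) where
  le a b := a = b ∨ (a.1.1 = a.1.2 ∧ (a.1.1 = b.1.1 ∨ a.1.1 = b.1.2))
  le_refl a := Or.inl rfl
  le_trans := by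
    rintro a b c hab hbc
    rcases hab with heq | ⟨h1, h2⟩
    · exact heq ▸ hbc
    · rcases hbc with heq | ⟨h3, h4⟩
      · subst heq; exact Or.inr ⟨h1, h2⟩
      · have hab1 : a.1.1 = b.1.1 := by
          rcases h2 with h | h
          · exact h
          · exact h.trans h3.symm
        refine Or.inr ⟨h1, ?_⟩
        rcases h4 with h | h
        · exact Or.inl (hab1.trans h)
        · exact Or.inr (hab1.trans h)

instance (n : ℕ) : DecidableEq (JA n) :=
  inferInstanceAs (DecidableEq {p : Fin (n+1) × Fin (n+1) // p.1 ≤ p.2})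

def vobj {n : ℕ} (i : Fin (n+1)) : JA n := ⟨(i, i), le_refl i⟩
def eobj {n : ℕ} (i j : Fin (n+1)) (h : i ≤ j) : JA n := ⟨(i, j), h⟩

def FA (n : ℕ) : JA n ⥤ SimplexCategory where
  obj _ := mk 1
  map {a b} _ :=
    if _ : a = b then 𝟙 (mk 1)
    else SimplexCategory.const (mk 1) (mk 1) (if a.1.1 = b.1.1 then 0 else 1)
  map_id a := dif_pos rfl
  map_comp {a b c} f g := by
    by_cases hab : a = b
    · subst hab
      simp
    · by_cases hbc : b = c
      · subst hbc
        simp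
      · exfalso
        obtain h | ⟨h1, h2⟩ := leOfHom f
        · exact hab h
        · obtain h | ⟨h3, h4⟩ := leOfHom g
          · exact hbc h
          · have hb : a.1.1 = b.1.1 := by
              rcases h2 with h | h
              · exact h
              · exact h.trans h3.symm
            apply hab
            apply Subtype.ext
            apply Prod.ext
            · exact hb
            · exact h1.symm.trans (hb.trans h3)

def CA (n : ℕ) : Cocone (FA n) where
  pt := mk n
  ι :=
    { app := fun a => edgeHom (mk n) a.1.1 a.1.2 a.2
      naturality := fun a b f => by
        show (FA n).map f ≫ edgeHom (mk n) b.1.1 b.1.2 b.2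
            = edgeHom (mk n) a.1.1 a.1.2 a.2 ≫ 𝟙 (mk n)
        rw [Category.comp_id]
        by_cases hab : a = b
        · subst hab
          rw [show (FA n).map f = 𝟙 (mk 1) from dif_pos rfl]
          exact Category.id_comp _
        · obtain h | ⟨h1, h2⟩ := leOfHom f
          · exact absurd h hab
          · rw [show (FA n).map f = SimplexCategory.const (mk 1) (mk 1)
                (if a.1.1 = b.1.1 then 0 else 1) from dif_neg hab]
            refine (SimplexCategory.const_comp _ _ _).trans ?_
            conv_rhs => rw [edgeHom_eq_const h1]
            congr 1
            by_cases hc : a.1.1 = b.1.1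
            · rw [if_pos hc, hc]; rfl
            · rw [if_neg hc]
              rcases h2 with h | h
              · exact absurd h hc
              · rw [h]; rfl }


section ColimA

variable {n : ℕ} (s : Cocone (FA n))

lemma homJA {i j : Fin (n+1)} (h : i ≤ j) : vobj i ≤ eobj i j h :=
  Or.inr ⟨rfl, Or.inl rfl⟩

lemma homJA' {i j : Fin (n+1)} (h : i ≤ j) : vobj j ≤ eobj i j h :=
  Or.inr ⟨rfl, Or.inr rfl⟩

/-- If the vertex object maps into some other object, its cocone component is constant. -/
lemma s_v_const {i : Fin (n+1)} {b : JA n} (hle : vobj i ≤ b) (hne : vobj i ≠ b)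
    (x y : Fin 2) :
    (s.ι.app (vobj i)).toOrderHom x = (s.ι.app (vobj i)).toOrderHom y := by
  have h2 : s.ι.app (vobj i) = SimplexCategory.const (mk 1) (mk 1)
      (if (vobj i : JA n).1.1 = b.1.1 then 0 else 1) ≫ s.ι.app b := by
    rw [← s.w (homOfLE hle),
      show (FA n).map (homOfLE hle) = SimplexCategory.const (mk 1) (mk 1)
        (if (vobj i : JA n).1.1 = b.1.1 then 0 else 1) from dif_neg hne]
    rfl
  rw [h2]
  rfl

lemma exists_strict (hn : 0 < n) (i : Fin (n+1)) :
    ∃ b : JA n, vobj i ≤ b ∧ vobj i ≠ b := by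
  rcases lt_or_ge (i : ℕ) n with h | h
  · refine ⟨eobj i ⟨(i : ℕ) + 1, by omega⟩ (by simp [Fin.le_def]), Or.inr ⟨rfl, Or.inl rfl⟩, ?_⟩
    intro hcon
    have := congrArg (fun z : JA n => ((z.1.2 : Fin (n+1)) : ℕ)) hcon
    simp [vobj, eobj] at this
  · have hi : (i : ℕ) = n := by omega
    have hn' : 0 < (i : ℕ) := by omega
    refine ⟨eobj ⟨(i : ℕ) - 1, by omega⟩ i (by simp only [Fin.le_def]; omega),
      Or.inr ⟨rfl, Or.inr rfl⟩, ?_⟩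
    intro hcon
    have := congrArg (fun z : JA n => ((z.1.1 : Fin (n+1)) : ℕ)) hcon
    simp [vobj, eobj] at this
    omega

lemma s_vertex_eq (i j : Fin (n+1)) (h : i ≤ j) :
    (s.ι.app (vobj i)).toOrderHom 0 = (s.ι.app (eobj i j h)).toOrderHom 0 := by
  by_cases hve : vobj i = eobj i j h
  · rw [hve]
  · have h2 : s.ι.app (vobj i) = SimplexCategory.const (mk 1) (mk 1)
        (if (vobj i : JA n).1.1 = (eobj i j h).1.1 then 0 else 1) ≫ s.ι.app (eobj i j h) := by
      rw [← s.w (homOfLE (homJA h)),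
        show (FA n).map (homOfLE (homJA h)) = SimplexCategory.const (mk 1) (mk 1)
          (if (vobj i : JA n).1.1 = (eobj i j h).1.1 then 0 else 1) from dif_neg hve]
      rfl
    rw [h2, if_pos (show (vobj (n := n) i).1.1 = (eobj i j h).1.1 from rfl)]
    rfl

lemma s_vertex_eq' (hn : 0 < n) (i j : Fin (n+1)) (h : i ≤ j) :
    (s.ι.app (vobj j)).toOrderHom 0 = (s.ι.app (eobj i j h)).toOrderHom 1 := by
  by_cases hve : vobj j = eobj i j h
  · rw [← hve]
    obtain ⟨b, h1, h2⟩ := exists_strict hn j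
    exact s_v_const s h1 h2 0 1
  · have h2 : s.ι.app (vobj j) = SimplexCategory.const (mk 1) (mk 1)
        (if (vobj j : JA n).1.1 = (eobj i j h).1.1 then 0 else 1) ≫ s.ι.app (eobj i j h) := by
      rw [← s.w (homOfLE (homJA' h)),
        show (FA n).map (homOfLE (homJA' h)) = SimplexCategory.const (mk 1) (mk 1)
          (if (vobj j : JA n).1.1 = (eobj i j h).1.1 then 0 else 1) from dif_neg hve]
      rfl
    have hji : ¬ ((vobj j : JA n).1.1 = (eobj i j h).1.1) := by
      intro hcon
      apply hve
      have : j = i := hcon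
      subst this
      rfl
    rw [h2, if_neg hji]
    rfl

def CAIsColim (n : ℕ) (hn : 0 < n) : IsColimit (CA n) where
  desc s := SimplexCategory.Hom.mk
    { toFun := fun i => (s.ι.app (vobj i)).toOrderHom 0
      monotone' := by
        intro i j hij
        calc (s.ι.app (vobj i)).toOrderHom 0
            = (s.ι.app (eobj i j hij)).toOrderHom 0 := s_vertex_eq s i j hij
          _ ≤ (s.ι.app (eobj i j hij)).toOrderHom 1 :=
              (s.ι.app (eobj i j hij)).toOrderHom.monotone (Fin.zero_le 1)
          _ = (s.ι.app (vobj j)).toOrderHom 0 := (s_vertex_eq' s hn i j hij).symm }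
  fac s a := by
    apply SimplexCategory.Hom.ext
    apply OrderHom.ext
    funext x
    match x with
    | 0 =>
      show (s.ι.app (vobj a.1.1)).toOrderHom 0 = _
      rw [s_vertex_eq s a.1.1 a.1.2 a.2]
      rfl
    | 1 =>
      show (s.ι.app (vobj a.1.2)).toOrderHom 0 = _
      rw [s_vertex_eq' s hn a.1.1 a.1.2 a.2]
      rfl
  uniq s m hm := by
    apply SimplexCategory.Hom.ext
    apply OrderHom.ext
    funext i
    have := congrArg (fun g => SimplexCategory.Hom.toOrderHom g 0) (hm (vobj i))
    exact this

end ColimA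


/-! ### The collapse coequalizer `[2] → [1]` -/

def forkB : Cofork (SimplexCategory.const (mk 0) (mk 2) 0) (SimplexCategory.const (mk 0) (mk 2) 1) :=
  Cofork.ofπ (SimplexCategory.σ (0 : Fin 2)) (by
    rw [SimplexCategory.const_comp, SimplexCategory.const_comp]
    congr 1)

def forkBIsColim : IsColimit forkB := by
  refine Cofork.IsColimit.mk _ (fun s => SimplexCategory.δ (1 : Fin 3) ≫ s.π) (fun s => ?_) (fun s m hm => ?_)
  · have hc := s.condition
    apply SimplexCategory.Hom.ext
    apply OrderHom.ext
    funext x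
    have hval : ∀ y : Fin ((mk 0).len + 1),
        (SimplexCategory.const (mk 0) (mk 2) 0 ≫ s.π).toOrderHom y
          = (SimplexCategory.const (mk 0) (mk 2) 1 ≫ s.π).toOrderHom y := by
      intro y; rw [hc]
    have h01 : s.π.toOrderHom 0 = s.π.toOrderHom 1 := hval 0
    show s.π.toOrderHom (SimplexCategory.Hom.toOrderHom _ _) = s.π.toOrderHom x
    match x with
    | 0 => exact congrArg s.π.toOrderHom (by decide)
    | 1 => exact (congrArg s.π.toOrderHom (by decide : (SimplexCategory.Hom.toOrderHom
        (SimplexCategory.σ (0 : Fin 2) ≫ SimplexCategory.δ (1 : Fin 3)) 1) = 0)).trans h01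
    | 2 => exact congrArg s.π.toOrderHom (by decide)
  · apply SimplexCategory.Hom.ext
    apply OrderHom.ext
    funext x
    have h2 : ∀ y : Fin ((mk 2).len + 1),
        (SimplexCategory.σ (0 : Fin 2) ≫ m).toOrderHom y = s.π.toOrderHom y := by
      intro y; rw [← hm]; rfl
    match x with
    | 0 =>
      have := h2 0
      exact this.trans (congrArg s.π.toOrderHom (by decide)).symm |>.trans rfl
    | 1 =>
      have := h2 2
      exact this.trans rfl


/-! ### Consequences of continuity -/

section Cont

variable (hX : IsContinuousSSet X)

include hX in
noncomputable def limA (n : ℕ) (hn : 0 < n) : IsLimit (X.mapCone ((CA n).op)) :=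
  (hX ((FA n).op) ((CA n).op) ⟨(CAIsColim n hn).op⟩).some

noncomputable def secEquiv (n : ℕ) (hn : 0 < n) :
    X.obj (op (mk n)) ≃ ((FA n).op ⋙ X).sections :=
  Types.isLimitEquivSections (limA X hX n hn)

lemma secEquiv_apply (n : ℕ) (hn : 0 < n) (σ : X.obj (op (mk n))) (a : JA n) :
    ((secEquiv X hX n hn) σ).1 (op a) = X.map (edgeHom (mk n) a.1.1 a.1.2 a.2).op σ :=
  rfl

lemma secEquiv_symm_apply (n : ℕ) (hn : 0 < n) (sec : ((FA n).op ⋙ X).sections) (a : JA n) :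
    X.map (edgeHom (mk n) a.1.1 a.1.2 a.2).op ((secEquiv X hX n hn).symm sec) = sec.1 (op a) :=
  Types.isLimitEquivSections_symm_apply (limA X hX n hn) sec (op a)

lemma exists_degenerate (hX : IsContinuousSSet X) (t : X.obj (op (mk 2)))
    (h : X.map (SimplexCategory.const (mk 0) (mk 2) 0).op t
       = X.map (SimplexCategory.const (mk 0) (mk 2) 1).op t) :
    ∃ w : X1 X, X.map (SimplexCategory.σ (0 : Fin 2)).op w = t := by
  obtain ⟨hl⟩ := hX _ (Cocone.op forkB) ⟨forkBIsColim.op⟩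
  let PF := parallelPair (SimplexCategory.const (mk 0) (mk 2) 0)
      (SimplexCategory.const (mk 0) (mk 2) 1)
  let sfun : ∀ j : WalkingParallelPairᵒᵖ, (PF.op ⋙ X).obj j := fun j =>
    match j with
    | ⟨WalkingParallelPair.zero⟩ => X.map (SimplexCategory.const (mk 0) (mk 2) 0).op t
    | ⟨WalkingParallelPair.one⟩ => t
  have hsec : ∀ {j j' : WalkingParallelPairᵒᵖ} (f : j ⟶ j'),
      (PF.op ⋙ X).map f (sfun j) = sfun j' := by
    rintro ⟨j⟩ ⟨j'⟩ f
    obtain ⟨g, rfl⟩ : ∃ g : j' ⟶ j, g.op = f := ⟨f.unop, rfl⟩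
    change WalkingParallelPairHom j' j at g
    cases g
    case id =>
      show X.map (PF.map (WalkingParallelPairHom.id j)).op (sfun (op j)) = sfun (op j)
      rw [show PF.map (WalkingParallelPairHom.id j) = 𝟙 (PF.obj j) from PF.map_id j]
      exact congrArg (fun u => u (sfun (op j))) (X.map_id (op (PF.obj j)))
    case left =>
      show X.map (PF.map WalkingParallelPairHom.left).op
          (sfun (op WalkingParallelPair.one)) = sfun (op WalkingParallelPair.zero)
      rfl
    case right =>
      show X.map (PF.map WalkingParallelPairHom.right).op
          (sfun (op WalkingParallelPair.one)) = sfun (op WalkingParallelPair.zero)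
      exact h.symm
  exact ⟨(Types.isLimitEquivSections hl).symm ⟨sfun, @hsec⟩,
    Types.isLimitEquivSections_symm_apply hl ⟨sfun, @hsec⟩ (op WalkingParallelPair.one)⟩

end Cont


lemma edge_unique (hX : IsContinuousSSet X) (e e' : X1 X)
    (h0 : ve0 X e = ve0 X e') (h1 : ve1 X e = ve1 X e') : e = e' := by
  classical
  let sc : JA 2 → X1 X := fun a =>
    if (a.1.2 : ℕ) ≤ 1 then s0 X (ve0 X e)
    else if (a.1.1 : ℕ) = 0 then e
    else if (a.1.1 : ℕ) = 1 then e'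
    else s0 X (ve1 X e)
  have hsec : ∀ {j j' : (JA 2)ᵒᵖ} (f : j ⟶ j'),
      ((FA 2).op ⋙ X).map f (sc j.unop) = sc j'.unop := by
    rintro ⟨q⟩ ⟨p⟩ f
    obtain ⟨g, rfl⟩ : ∃ g : p ⟶ q, g.op = f := ⟨f.unop, rfl⟩
    show X.map ((FA 2).map g).op (sc q) = sc p
    by_cases hpq : p = q
    · rw [show (FA 2).map g = 𝟙 (mk 1) from dif_pos hpq, hpq]
      exact congrArg (fun u => u (sc q)) (X.map_id (op (mk 1)))
    · obtain hEq | ⟨hv, hor⟩ := leOfHom g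
      · exact absurd hEq hpq
      · obtain ⟨⟨p1, p2⟩, hp⟩ := p
        obtain ⟨⟨q1, q2⟩, hq⟩ := q
        rw [show (FA 2).map g = SimplexCategory.const (mk 1) (mk 1)
            (if p1 = q1 then 0 else 1) from dif_neg hpq]
        refine (map_const11 X _ _).trans ?_
        have hv' : p1 = p2 := hv
        subst hv'
        fin_cases q1 <;> fin_cases q2 <;>
          first
            | exact absurd hq (by decide)
            | (rcases hor with h | h <;> subst h <;>
                simp only [sc, vc_s0] <;> norm_num <;>
                first
                  | rfl
                  | (rw [vc_s0])
                  | (rw [← h0]; rfl)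
                  | (rw [← h1]; rfl)
                  | (rw [h0]; rfl)
                  | (rw [h1]; rfl)
                  | skip)
  let sec : ((FA 2).op ⋙ X).sections := ⟨fun j => sc j.unop, @hsec⟩
  have h2pos : 0 < 2 := by norm_num
  let σA := (secEquiv X hX 2 h2pos).symm sec
  have hedge : ∀ (a : JA 2), X.map (edgeHom (mk 2) a.1.1 a.1.2 a.2).op σA = sc a :=
    fun a => secEquiv_symm_apply X hX 2 h2pos sec a
  have h01 : (0 : Fin 3) ≤ 1 := by decide
  have h02 : (0 : Fin 3) ≤ 2 := by decide
  have h12 : (1 : Fin 3) ≤ 2 := by decide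
  have hfac0 : SimplexCategory.const (mk 0) (mk 2) 0
      = SimplexCategory.const (mk 0) (mk 1) 0 ≫ edgeHom (mk 2) 0 1 h01 := by
    rw [SimplexCategory.const_comp]; rfl
  have hfac1 : SimplexCategory.const (mk 0) (mk 2) 1
      = SimplexCategory.const (mk 0) (mk 1) 1 ≫ edgeHom (mk 2) 0 1 h01 := by
    rw [SimplexCategory.const_comp]; rfl
  have hsc01 : sc (⟨(0, 1), h01⟩ : JA 2) = s0 X (ve0 X e) := by simp only [sc]; norm_num
  have hsc02 : sc (⟨(0, 2), h02⟩ : JA 2) = e := by simp only [sc]; norm_num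
  have hsc12 : sc (⟨(1, 2), h12⟩ : JA 2) = e' := by simp only [sc]; norm_num
  have hv0 : X.map (SimplexCategory.const (mk 0) (mk 2) 0).op σA = ve0 X e := by
    rw [hfac0, ← map_map, hedge ⟨(0, 1), h01⟩, hsc01, vc_s0]
  have hv1 : X.map (SimplexCategory.const (mk 0) (mk 2) 1).op σA = ve0 X e := by
    rw [hfac1, ← map_map, hedge ⟨(0, 1), h01⟩, hsc01, vc_s0]
  obtain ⟨w, hw⟩ := exists_degenerate X hX σA (hv0.trans hv1.symm)
  have hcomp02 : edgeHom (mk 2) 0 2 h02 ≫ SimplexCategory.σ (0 : Fin 2) = 𝟙 (mk 1) := by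
    apply SimplexCategory.Hom.ext
    apply OrderHom.ext
    funext x
    fin_cases x <;> rfl
  have hcomp12 : edgeHom (mk 2) 1 2 h12 ≫ SimplexCategory.σ (0 : Fin 2) = 𝟙 (mk 1) := by
    apply SimplexCategory.Hom.ext
    apply OrderHom.ext
    funext x
    fin_cases x <;> rfl
  have he : e = w := by
    rw [← hsc02, ← hedge ⟨(0, 2), h02⟩, ← hw, map_map, hcomp02]
    exact (congrArg (fun u => u w) (X.map_id (op (mk 1)))).symm |>.symm
  have he' : e' = w := by
    rw [← hsc12, ← hedge ⟨(1, 2), h12⟩, ← hw, map_map, hcomp12]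
    exact (congrArg (fun u => u w) (X.map_id (op (mk 1)))).symm |>.symm
  exact he.trans he'.symm


/-! ### The comparison map and the main theorem -/

section Main

variable (instP : PartialOrder (X0 X))
variable (hle : ∀ x y, instP.le x y ↔ sSetLe X x y)

lemma d1_edge {z : SimplexCategory} (i j : Fin (z.len + 1)) (h : i ≤ j) (σ : X.obj (op z)) :
    X.map (SimplexCategory.δ 1).op (X.map (edgeHom z i j h).op σ) = vtx X i σ := by
  rw [delta1_eq, map_map, SimplexCategory.const_comp, edgeHom_zero]
  rfl

lemma d0_edge {z : SimplexCategory} (i j : Fin (z.len + 1)) (h : i ≤ j) (σ : X.obj (op z)) :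
    X.map (SimplexCategory.δ 0).op (X.map (edgeHom z i j h).op σ) = vtx X j σ := by
  rw [delta0_eq, map_map, SimplexCategory.const_comp, edgeHom_one]
  rfl

noncomputable def eOf {x y : X0 X} (h : instP.le x y) : X1 X :=
  ((hle x y).mp h).choose

lemma eOf_ve0 {x y : X0 X} (h : instP.le x y) : ve0 X (eOf X instP hle h) = x := by
  have hh := ((hle x y).mp h).choose_spec.1
  have hfun : X.map (SimplexCategory.δ 1 : mk 0 ⟶ mk 1).op
      = X.map (SimplexCategory.const (mk 0) (mk 1) 0).op :=
    congrArg (fun f : mk 0 ⟶ mk 1 => X.map f.op) delta1_eq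
  exact ((congrArg (fun u : X1 X ⟶ X0 X => u (eOf X instP hle h)) hfun).symm.trans hh)

lemma eOf_ve1 {x y : X0 X} (h : instP.le x y) : ve1 X (eOf X instP hle h) = y := by
  have hh := ((hle x y).mp h).choose_spec.2
  have hfun : X.map (SimplexCategory.δ 0 : mk 0 ⟶ mk 1).op
      = X.map (SimplexCategory.const (mk 0) (mk 1) 1).op :=
    congrArg (fun f : mk 0 ⟶ mk 1 => X.map f.op) delta0_eq
  exact ((congrArg (fun u : X1 X ⟶ X0 X => u (eOf X instP hle h)) hfun).symm.trans hh)

lemma ve0_s0 (z : X0 X) : ve0 X (s0 X z) = z := vc_s0 X 0 z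
lemma ve1_s0 (z : X0 X) : ve1 X (s0 X z) = z := vc_s0 X 1 z

/-- The comparison natural transformation `X ⟶ N(P)`. -/
def phi : X ⟶ posetNerve.obj (@PartOrd.of (X0 X) instP) where
  app m := TypeCat.ofHom fun σ =>
    show deltaToPartOrd.obj m.unop ⟶ (@PartOrd.of (X0 X) instP) from
    @PartOrd.ofHom _ _ _ instP (@OrderHom.mk _ _ _ instP.toPreorder (fun i => vtx X i σ)
      (fun i j hij => (hle _ _).mpr
        ⟨X.map (edgeHom m.unop i j hij).op σ, d1_edge X i j hij σ, d0_edge X i j hij σ⟩))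
  naturality {m m'} u := by
    refine ConcreteCategory.hom_ext _ _ (fun σ => ?_)
    apply PartOrd.hom_ext
    apply OrderHom.ext
    funext i
    exact vtx_natural X u σ i

lemma phi_apply (m : SimplexCategoryᵒᵖ) (σ : X.obj m) (i : Fin (m.unop.len + 1)) :
    @OrderHom.toFun (Fin (m.unop.len + 1)) (X0 X) _ instP.toPreorder
      ((phi X instP hle).app m σ).hom i = vtx X i σ := rfl

lemma phi_bij (hX : IsContinuousSSet X) (n : ℕ) :
    Function.Bijective ((phi X instP hle).app (op (mk n))) := by
  cases n with
  | zero =>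
    constructor
    · intro a b hab
      have h' : vtx X (0 : Fin ((mk 0).len + 1)) a = vtx X 0 b :=
        congrArg (fun g => @OrderHom.toFun (Fin ((mk 0).len + 1)) (X0 X) _
          instP.toPreorder (PartOrd.Hom.hom g) 0) hab
      exact (vtx_zero X 0 a).symm.trans (h'.trans (vtx_zero X 0 b))
    · intro g
      refine ⟨@OrderHom.toFun (Fin ((mk 0).len + 1)) (X0 X) _ instP.toPreorder g.hom 0, ?_⟩
      apply PartOrd.hom_ext
      apply OrderHom.ext
      funext i
      have h1 : i = (0 : Fin ((mk 0).len + 1)) := Fin.eq_zero i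
      exact (vtx_zero X i _).trans
        (congrArg (@OrderHom.toFun (Fin ((mk 0).len + 1)) (X0 X) _ instP.toPreorder g.hom) h1.symm)
  | succ k =>
    have hn : 0 < k + 1 := Nat.succ_pos k
    constructor
    · intro a b hab
      apply (secEquiv X hX (k+1) hn).injective
      apply Subtype.ext
      funext j
      obtain ⟨aJ⟩ := j
      show ((secEquiv X hX (k+1) hn) a).1 (op aJ) = ((secEquiv X hX (k+1) hn) b).1 (op aJ)
      rw [secEquiv_apply, secEquiv_apply]
      have hv : ∀ i : Fin ((mk (k+1)).len + 1), vtx X i a = vtx X i b := fun i =>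
        congrArg (fun g => @OrderHom.toFun (Fin ((mk (k+1)).len + 1)) (X0 X) _
          instP.toPreorder (PartOrd.Hom.hom g) i) hab
      apply edge_unique X hX
      · rw [ve0_edge, ve0_edge]; exact hv _
      · rw [ve1_edge, ve1_edge]; exact hv _
    · intro g
      set gf : Fin ((mk (k+1)).len + 1) → X0 X :=
        @OrderHom.toFun (Fin ((mk (k+1)).len + 1)) (X0 X) _ instP.toPreorder g.hom with hgf
      have gmono : ∀ {i j : Fin ((mk (k+1)).len + 1)}, i ≤ j → instP.le (gf i) (gf j) :=
        fun hij => (@OrderHom.monotone (Fin ((mk (k+1)).len + 1)) (X0 X) _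
          instP.toPreorder g.hom) hij
      let sv : JA (k+1) → X1 X := fun a => eOf X instP hle (gmono a.2)
      have hsv0 : ∀ a : JA (k+1), ve0 X (sv a) = gf a.1.1 := fun a => eOf_ve0 X instP hle _
      have hsv1 : ∀ a : JA (k+1), ve1 X (sv a) = gf a.1.2 := fun a => eOf_ve1 X instP hle _
      have hsec : ∀ {j j' : (JA (k+1))ᵒᵖ} (f : j ⟶ j'),
          ((FA (k+1)).op ⋙ X).map f (sv j.unop) = sv j'.unop := by
        rintro ⟨q⟩ ⟨p⟩ f
        obtain ⟨gg, rfl⟩ : ∃ gg : p ⟶ q, gg.op = f := ⟨f.unop, rfl⟩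
        show X.map ((FA (k+1)).map gg).op (sv q) = sv p
        by_cases hpq : p = q
        · rw [show (FA (k+1)).map gg = 𝟙 (mk 1) from dif_pos hpq, hpq]
          exact congrArg (fun u => u (sv q)) (X.map_id (op (mk 1)))
        · obtain hEq | ⟨hvq, hor⟩ := leOfHom gg
          · exact absurd hEq hpq
          · rw [show (FA (k+1)).map gg = SimplexCategory.const (mk 1) (mk 1)
                (if p.1.1 = q.1.1 then 0 else 1) from dif_neg hpq]
            refine (map_const11 X _ _).trans ?_
            have hV : X.map (SimplexCategory.const (mk 0) (mk 1)
                (if p.1.1 = q.1.1 then 0 else 1)).op (sv q) = gf p.1.1 := by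
              by_cases hc : p.1.1 = q.1.1
              · rw [if_pos hc]
                exact (hsv0 q).trans (congrArg gf hc.symm)
              · rw [if_neg hc]
                have hor' : p.1.1 = q.1.2 := by
                  rcases hor with h | h
                  · exact absurd h hc
                  · exact h
                exact (hsv1 q).trans (congrArg gf hor'.symm)
            apply edge_unique X hX
            · rw [ve0_s0, hV, hsv0]
            · rw [ve1_s0, hV, hsv1]
              exact congrArg gf hvq
      refine ⟨(secEquiv X hX (k+1) hn).symm ⟨fun j => sv j.unop, @hsec⟩, ?_⟩
      apply PartOrd.hom_ext
      apply OrderHom.ext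
      funext i
      have h1 : vtx X i ((secEquiv X hX (k+1) hn).symm ⟨fun j => sv j.unop, @hsec⟩)
          = ve0 X (X.map (edgeHom (mk (k+1)) (vobj i).1.1 (vobj i).1.2 (vobj i).2).op
            ((secEquiv X hX (k+1) hn).symm ⟨fun j => sv j.unop, @hsec⟩)) :=
        (ve0_edge X (vobj i).1.1 (vobj i).1.2 (vobj i).2 _).symm
      have h2 := secEquiv_symm_apply X hX (k+1) hn ⟨fun j => sv j.unop, @hsec⟩ (vobj i)
      exact (h1.trans (congrArg (ve0 X) h2)).trans (hsv0 (vobj i))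

end Main

end CP

/-- Every continuous simplicial set is isomorphic to the nerve of a
partially ordered set: if `X : Δᵒᵖ → Set` is continuous, then `X ≅ N(P)` where `P` is
the poset `(X₀, ≤_X)` (here the partial order structure on `X₀` whose order relation
is `≤_X` is given as a hypothesis; it exists since `≤_X` is a partial order). -/
theorem continuous_sset_iso_nerve (X : SimplexCategoryᵒᵖ ⥤ Type) (hX : IsContinuousSSet X)
    (instP : PartialOrder (X.obj (op (SimplexCategory.mk 0))))
    (hle : ∀ x y, instP.le x y ↔ sSetLe X x y) :
    Nonempty (X ≅ posetNerve.obj (@PartOrd.of (X.obj (op (SimplexCategory.mk 0))) instP)) := by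
  have hbij : ∀ m : SimplexCategoryᵒᵖ, Function.Bijective ((CP.phi X instP hle).app m) := by
    intro m
    have hm : op (SimplexCategory.mk m.unop.len) = m :=
      congrArg op (SimplexCategory.mk_len m.unop)
    rw [← hm]
    exact CP.phi_bij X instP hle hX m.unop.len
  haveI : ∀ m, IsIso ((CP.phi X instP hle).app m) :=
    fun m => (CategoryTheory.isIso_iff_bijective _).mpr (hbij m)
  haveI : IsIso (CP.phi X instP hle) := NatIso.isIso_of_isIso_app _
  exact ⟨asIso (CP.phi X instP hle)⟩
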